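/- Let E₀ > 0 and let ψ : Ḡ×ℝ³×I → ℝ be continuous, twice continuously differentiable in E and three times continuously differentiable in the middle (spatial/direction) variable y (ψ ∈ C(Ḡ, C²(I, C³(ℝ³)))). Fix x ∈ Ḡ, ω ∈ S, E ∈ [E₀,E_m), and define F(E') := ∫_0^{2π} ψ(x, γ(E',E,ω)(s), E') ds for E' ∈ [E, E_m]. Then: (1) for every E' ∈ (E, E_m), F is differentiable at E' with F'(E') = ∫_0^{2π} ⟨∇_yψ(x, γ(E',E,ω)(s), E'), (∂γ/∂E')(E',E,ω)(s)⟩ ds + ∫_0^{2π} (∂ψ/∂E)(x, γ(E',E,ω)(s), E') ds; and (2) the limit L := lim_{E'→E⁺} ∫_0^{2π} ⟨∇_yψ(x, γ(E',E,ω)(s), E'), (∂γ/∂E')(E',E,ω)(s)⟩ ds exists, and F has a right derivative at E' = E equal to 2π·(∂ψ/∂E)(x,ω,E) + L. -/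

import Mathlib

open MeasureTheory Filter Set Metric
open scoped Topology Real

noncomputable section

abbrev E3 : Type := EuclideanSpace ℝ (Fin 3)

/-- The vector `(a,b,c) ∈ ℝ³` as an element of `EuclideanSpace ℝ (Fin 3)`. -/
def vec3 (a b c : ℝ) : E3 := (EuclideanSpace.equiv (Fin 3) ℝ).symm ![a, b, c]

/-- The third standard basis vector `e₃`. -/
def e₃ : E3 := EuclideanSpace.single 2 1

/-- `μ(E',E) = √( E(E'+2) / (E'(E+2)) )`. -/
def mu (E' E : ℝ) : ℝ := Real.sqrt (E * (E' + 2) / (E' * (E + 2)))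

section Vec3

lemma e3_eq : e₃ = vec3 0 0 1 := by
  ext i
  fin_cases i <;> simp [e₃, vec3, EuclideanSpace.single_apply]

lemma vec3_decomp (a b c : ℝ) : vec3 a b c = a • vec3 1 0 0 + b • vec3 0 1 0 + c • e₃ := by
  ext i
  fin_cases i <;> simp [vec3, e₃, EuclideanSpace.single_apply]

lemma norm_vec3_unit₁ : ‖vec3 1 0 0‖ = 1 := by
  simp [vec3, EuclideanSpace.norm_eq, Fin.sum_univ_three]

lemma norm_vec3_unit₂ : ‖vec3 0 1 0‖ = 1 := by
  simp [vec3, EuclideanSpace.norm_eq, Fin.sum_univ_three]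

lemma norm_e₃ : ‖e₃‖ = 1 := by
  rw [e3_eq]; simp [vec3, EuclideanSpace.norm_eq, Fin.sum_univ_three]

lemma norm_vec3_le (a b c : ℝ) : ‖vec3 a b c‖ ≤ |a| + |b| + |c| := by
  rw [vec3_decomp]
  refine le_trans (norm_add_le _ _) ?_
  gcongr
  · refine le_trans (norm_add_le _ _) ?_
    gcongr <;> rw [norm_smul]
    · rw [norm_vec3_unit₁]; simp
    · rw [norm_vec3_unit₂]; simp
  · rw [norm_smul, norm_e₃]; simp

end Vec3

section Mu

variable {E t : ℝ}

lemma mu_sq (hE : 0 < E) (ht : 0 < t) : mu t E ^ 2 = E * (t + 2) / (t * (E + 2)) := by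
  rw [mu, Real.sq_sqrt]
  positivity

lemma mu_pos (hE : 0 < E) (ht : 0 < t) : 0 < mu t E := by
  apply Real.sqrt_pos.2; positivity

lemma mu_self (hE : 0 < E) : mu E E = 1 := by
  rw [mu, div_self (by positivity), Real.sqrt_one]

lemma mu_le_one (hE : 0 < E) (ht : E ≤ t) : mu t E ≤ 1 := by
  have ht0 : 0 < t := lt_of_lt_of_le hE ht
  rw [mu]
  apply Real.sqrt_le_one.mpr
  rw [div_le_one (by positivity)]
  nlinarith

lemma mu_lt_one (hE : 0 < E) (ht : E < t) : mu t E < 1 := by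
  have ht0 : 0 < t := hE.trans ht
  rw [mu]
  have : E * (t + 2) / (t * (E + 2)) < 1 := by
    rw [div_lt_one (by positivity)]; nlinarith
  calc Real.sqrt (E * (t + 2) / (t * (E + 2))) < Real.sqrt 1 := by
        apply Real.sqrt_lt_sqrt (by positivity) this
    _ = 1 := Real.sqrt_one

/-- Explicit formula for the derivative of `mu · E`. -/
def muD (E t : ℝ) : ℝ :=
  (-(2 * E) / ((E + 2) * t ^ 2)) / (2 * Real.sqrt (E * (t + 2) / (t * (E + 2))))

lemma hasDerivAt_mu (hE : 0 < E) (ht : 0 < t) :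
    HasDerivAt (fun u => mu u E) (muD E t) t := by
  have hden : t * (E + 2) ≠ 0 := by positivity
  have hq : E * (t + 2) / (t * (E + 2)) ≠ 0 := by positivity
  have h1 : HasDerivAt (fun u : ℝ => E * (u + 2)) E t := by
    simpa using ((hasDerivAt_id t).add_const 2).const_mul E
  have h2 : HasDerivAt (fun u : ℝ => u * (E + 2)) (E + 2) t := by
    simpa using (hasDerivAt_id t).mul_const (E + 2)
  have hq' := h1.div h2 hden
  have := hq'.sqrt hq
  refine (show HasDerivAt (fun u => mu u E) _ t from this).congr_deriv ?_
  symm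
  rw [muD]
  congr 1
  field_simp
  ring

lemma deriv_mu (hE : 0 < E) (ht : 0 < t) : deriv (fun u => mu u E) t = muD E t :=
  (hasDerivAt_mu hE ht).deriv

lemma continuousOn_muD (hE : 0 < E) : ContinuousOn (muD E) (Ioi 0) := by
  apply ContinuousOn.div
  · apply ContinuousOn.div continuousOn_const
    · fun_prop
    · intro t ht
      have : (0:ℝ) < t := ht
      positivity
  · apply ContinuousOn.mul continuousOn_const
    apply Real.continuous_sqrt.comp_continuousOn
    apply ContinuousOn.div (by fun_prop) (by fun_prop)
    intro t ht
    have : (0:ℝ) < t := ht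
    positivity
  · intro t ht
    have ht' : (0:ℝ) < t := ht
    have : 0 < Real.sqrt (E * (t + 2) / (t * (E + 2))) := Real.sqrt_pos.2 (by positivity)
    positivity

lemma continuousOn_mu (hE : 0 < E) : ContinuousOn (fun t => mu t E) (Ioi 0) := by
  apply Real.continuous_sqrt.comp_continuousOn
  apply ContinuousOn.div (by fun_prop) (by fun_prop)
  intro t ht
  have : (0:ℝ) < t := ht
  positivity

lemma sig_sq (hE : 0 < E) (ht : E ≤ t) :
    Real.sqrt (1 - mu t E ^ 2) ^ 2 = 1 - mu t E ^ 2 := by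
  rw [Real.sq_sqrt]
  have := mu_le_one hE ht
  have h0 := (mu_pos hE (hE.trans_le ht)).le
  nlinarith

lemma sig_pos (hE : 0 < E) (ht : E < t) : 0 < Real.sqrt (1 - mu t E ^ 2) := by
  apply Real.sqrt_pos.2
  have := mu_lt_one hE ht
  have h0 := (mu_pos hE (hE.trans ht)).le
  nlinarith

lemma sig_le_one : Real.sqrt (1 - mu t E ^ 2) ≤ 1 :=
  Real.sqrt_le_one.mpr (by nlinarith [sq_nonneg (mu t E)])

lemma hasDerivAt_sig (hE : 0 < E) (ht : E < t) :
    HasDerivAt (fun u => Real.sqrt (1 - mu u E ^ 2))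
      (-(mu t E) * muD E t / Real.sqrt (1 - mu t E ^ 2)) t := by
  have h1 : HasDerivAt (fun u => 1 - mu u E ^ 2) (-(2 * mu t E * muD E t)) t := by
    have := ((hasDerivAt_mu hE (hE.trans ht)).pow 2).const_sub 1
    refine (show HasDerivAt (fun u => 1 - mu u E ^ 2) _ t from this).congr_deriv ?_
    ring
  have hne : 1 - mu t E ^ 2 ≠ 0 := by
    have := mu_lt_one hE ht
    have h0 := (mu_pos hE (hE.trans ht)).le
    nlinarith
  have := h1.sqrt hne
  have hσ := sig_pos hE ht
  convert this using 1
  rw [div_eq_div_iff (ne_of_gt hσ) (by positivity)]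
  ring

lemma continuousOn_sig (hE : 0 < E) :
    ContinuousOn (fun t => Real.sqrt (1 - mu t E ^ 2)) (Ioi 0) := by
  apply Real.continuous_sqrt.comp_continuousOn
  exact continuousOn_const.sub ((continuousOn_mu hE).pow 2)

end Mu
section Helpers

variable {H : Type*} [NormedAddCommGroup H] [NormedSpace ℝ H]

/-- Composition `t ↦ f (γ t) t` has a derivative, assuming continuity of the spatial
partial derivative near the point and a partial derivative in the scalar variable. -/
lemma hasDerivAt_comp_partial {f : H → ℝ → ℝ} {D : H → ℝ → (H →L[ℝ] ℝ)}
    {γ : ℝ → H} {γ' : H} {t₀ b : ℝ}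
    (hγ : HasDerivAt γ γ' t₀)
    (hD : ∀ᶠ p : H × ℝ in 𝓝 (γ t₀, t₀), HasFDerivAt (fun y => f y p.2) (D p.1 p.2) p.1)
    (hDc : ContinuousAt (fun p : H × ℝ => D p.1 p.2) (γ t₀, t₀))
    (hb : HasDerivAt (fun u => f (γ t₀) u) b t₀) :
    HasDerivAt (fun t => f (γ t) t) (D (γ t₀) t₀ γ' + b) t₀ := by
  set A := D (γ t₀) t₀ with hA
  have key : HasDerivAt (fun t => f (γ t) t - f (γ t₀) t) (A γ') t₀ := by
    rw [hasDerivAt_iff_isLittleO]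
    have decomp : ∀ t, (f (γ t) t - f (γ t₀) t) - ((f (γ t₀) t₀ - f (γ t₀) t₀)) -
        (t - t₀) • A γ' =
        (f (γ t) t - f (γ t₀) t - A (γ t - γ t₀)) + A (γ t - γ t₀ - (t - t₀) • γ') := by
      intro t
      have hAs : A (γ t - γ t₀ - (t - t₀) • γ') =
          A (γ t) - A (γ t₀) - (t - t₀) • A γ' := by
        rw [map_sub, map_sub, ContinuousLinearMap.map_smul]
      rw [hAs, map_sub]
      ring
    have h2 : (fun t => A (γ t - γ t₀ - (t - t₀) • γ')) =o[𝓝 t₀] fun t => t - t₀ := by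
      have := hasDerivAt_iff_isLittleO.1 hγ
      exact (A.isBigO_comp _ _).trans_isLittleO this
    have h1 : (fun t => f (γ t) t - f (γ t₀) t - A (γ t - γ t₀)) =o[𝓝 t₀]
        fun t => t - t₀ := by
      have hbig : (fun t => γ t - γ t₀) =O[𝓝 t₀] fun t => t - t₀ :=
        hγ.isBigO_sub
      refine Asymptotics.IsLittleO.trans_isBigO ?_ hbig
      rw [Asymptotics.isLittleO_iff]
      intro c hc
      -- find δ such that on ball of radius δ in the product, we have derivative and closeness
      have hball : ∀ᶠ p : H × ℝ in 𝓝 (γ t₀, t₀),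
          HasFDerivAt (fun y => f y p.2) (D p.1 p.2) p.1 ∧ ‖D p.1 p.2 - A‖ ≤ c := by
        filter_upwards [hD, hDc (closedBall_mem_nhds _ hc)] with p h1 h2
        refine ⟨h1, ?_⟩
        have : dist (D p.1 p.2) A ≤ c := h2
        rwa [dist_eq_norm] at this
      rcases Metric.eventually_nhds_iff_ball.1 hball with ⟨δ, hδ, hδball⟩
      have hcont : ContinuousAt γ t₀ := hγ.continuousAt
      have hev : ∀ᶠ t in 𝓝 t₀, dist (γ t) (γ t₀) < δ / 2 ∧ dist t t₀ < δ / 2 := by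
        refine Eventually.and ?_ ?_
        · exact hcont (Metric.ball_mem_nhds _ (by positivity))
        · exact Metric.eventually_nhds_iff_ball.2 ⟨δ/2, by positivity, fun y hy => hy⟩
      filter_upwards [hev] with t ht
      -- apply the mean value inequality on the ball of radius δ/2 around γ t₀
      set s : Set H := Metric.ball (γ t₀) (δ / 2)
      have hs : Convex ℝ s := convex_ball _ _
      have hmem : ∀ y ∈ s, ((y : H), t) ∈ Metric.ball ((γ t₀, t₀) : H × ℝ) δ := by
        intro y hy
        rw [Metric.mem_ball, Prod.dist_eq]
        exact max_lt (lt_of_lt_of_le hy (by linarith)) (lt_of_lt_of_le ht.2 (by linarith))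
      have hderiv : ∀ y ∈ s, HasFDerivWithinAt (fun z => f z t - A z)
          (D y t - A) s y := by
        intro y hy
        exact (((hδball _ (hmem y hy)).1).sub A.hasFDerivAt).hasFDerivWithinAt
      have hbound : ∀ y ∈ s, ‖D y t - A‖ ≤ c := fun y hy => (hδball _ (hmem y hy)).2
      have hγt : γ t ∈ s := Metric.mem_ball.2 ht.1
      have hγt₀ : γ t₀ ∈ s := Metric.mem_ball_self (by positivity)
      have := hs.norm_image_sub_le_of_norm_hasFDerivWithin_le hderiv hbound hγt₀ hγt
      calc ‖f (γ t) t - f (γ t₀) t - A (γ t - γ t₀)‖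
          = ‖(f (γ t) t - A (γ t)) - (f (γ t₀) t - A (γ t₀))‖ := by
            congr 1; simp only [map_sub]; ring
        _ ≤ c * ‖γ t - γ t₀‖ := this
    exact (h1.add h2).congr (fun t => (decomp t).symm) fun t => rfl
  have : (fun t => f (γ t) t) = (fun t => (f (γ t) t - f (γ t₀) t) + f (γ t₀) t) := by
    funext t; ring
  rw [this]
  exact key.add hb

/-- Composition with a jointly continuous function on `univ ×ˢ I`. -/
lemma tendsto_comp_jointCont {Z : Type*} [TopologicalSpace Z] {g : H × ℝ → Z} {I : Set ℝ}
    (hg : ContinuousOn g (Set.univ ×ˢ I)) {α : Type*} {l : Filter α}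
    {y : α → H} {u : α → ℝ} {y₀ : H} {t₀ : ℝ}
    (hy : Filter.Tendsto y l (𝓝 y₀)) (hu : Filter.Tendsto u l (𝓝 t₀))
    (hmem : ∀ᶠ a in l, u a ∈ I) (h₀ : t₀ ∈ I) :
    Filter.Tendsto (fun a => g (y a, u a)) l (𝓝 (g (y₀, t₀))) := by
  have hc : Filter.Tendsto g (𝓝[Set.univ ×ˢ I] (y₀, t₀)) (𝓝 (g (y₀, t₀))) :=
    hg (y₀, t₀) ⟨Set.mem_univ _, h₀⟩
  apply hc.comp
  rw [tendsto_nhdsWithin_iff]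
  constructor
  · exact hy.prodMk_nhds hu
  · filter_upwards [hmem] with a ha
    exact ⟨Set.mem_univ _, ha⟩

end Helpers
/-- The parametrization `γ(E',E,ω)(s) = R(ω)(√(1−μ²)cos s, √(1−μ²)sin s, μ)` of the circle
`{ω' ∈ S : ω'·ω = μ(E',E)}`. -/
def gam (R : E3 → (E3 ≃ₗᵢ[ℝ] E3)) (E' E : ℝ) (ω : E3) (s : ℝ) : E3 :=
  R ω (vec3 (Real.sqrt (1 - mu E' E ^ 2) * Real.cos s)
        (Real.sqrt (1 - mu E' E ^ 2) * Real.sin s) (mu E' E))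

/-- The partial derivative `(∂γ/∂E')(E',E,ω)(s)
  = (∂_{E'}μ)·R(ω)( −μcos s/√(1−μ²), −μ sin s/√(1−μ²), 1 )`. -/
def dgamE' (R : E3 → (E3 ≃ₗᵢ[ℝ] E3)) (E' E : ℝ) (ω : E3) (s : ℝ) : E3 :=
  (deriv (fun t => mu t E) E') •
    R ω (vec3 (-(mu E' E) * Real.cos s / Real.sqrt (1 - mu E' E ^ 2))
          (-(mu E' E) * Real.sin s / Real.sqrt (1 - mu E' E ^ 2)) 1)

section Gamma

variable {R : E3 → (E3 ≃ₗᵢ[ℝ] E3)} {ω : E3} {E t : ℝ}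

lemma gam_eq (hRω : R ω e₃ = ω) (t s : ℝ) :
    gam R t E ω s = (Real.sqrt (1 - mu t E ^ 2) * Real.cos s) • R ω (vec3 1 0 0)
      + (Real.sqrt (1 - mu t E ^ 2) * Real.sin s) • R ω (vec3 0 1 0) + mu t E • ω := by
  rw [gam, vec3_decomp, map_add, map_add, _root_.map_smul, _root_.map_smul, _root_.map_smul, hRω]

lemma gam_self (hE : 0 < E) (hRω : R ω e₃ = ω) (s : ℝ) : gam R E E ω s = ω := by
  rw [gam_eq hRω, mu_self hE]
  norm_num

lemma norm_gam_le (hE : 0 < E) (ht : E ≤ t) (s : ℝ) : ‖gam R t E ω s‖ ≤ 3 := by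
  rw [gam]
  rw [(R ω).norm_map]
  refine le_trans (norm_vec3_le _ _ _) ?_
  have h1 : |Real.sqrt (1 - mu t E ^ 2) * Real.cos s| ≤ 1 := by
    rw [abs_mul]
    have := Real.sqrt_nonneg (1 - mu t E ^ 2)
    calc |Real.sqrt (1 - mu t E ^ 2)| * |Real.cos s| ≤ 1 * 1 := by
          apply mul_le_mul _ (Real.abs_cos_le_one s) (abs_nonneg _) zero_le_one
          rw [abs_of_nonneg this]; exact sig_le_one
      _ = 1 := by norm_num
  have h2 : |Real.sqrt (1 - mu t E ^ 2) * Real.sin s| ≤ 1 := by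
    rw [abs_mul]
    have := Real.sqrt_nonneg (1 - mu t E ^ 2)
    calc |Real.sqrt (1 - mu t E ^ 2)| * |Real.sin s| ≤ 1 * 1 := by
          apply mul_le_mul _ (Real.abs_sin_le_one s) (abs_nonneg _) zero_le_one
          rw [abs_of_nonneg this]; exact sig_le_one
      _ = 1 := by norm_num
  have h3 : |mu t E| ≤ 1 := by
    rw [abs_of_nonneg (mu_pos hE (hE.trans_le ht)).le]
    exact mu_le_one hE ht
  linarith

lemma hasDerivAt_gam (hE : 0 < E) (ht : E < t) (hRω : R ω e₃ = ω) (s : ℝ) :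
    HasDerivAt (fun u => gam R u E ω s) (dgamE' R t E ω s) t := by
  have hσ := hasDerivAt_sig hE ht
  have hμ := hasDerivAt_mu hE (hE.trans ht)
  have hfun : (fun u => gam R u E ω s) = fun u =>
      (Real.sqrt (1 - mu u E ^ 2) * Real.cos s) • R ω (vec3 1 0 0)
      + (Real.sqrt (1 - mu u E ^ 2) * Real.sin s) • R ω (vec3 0 1 0) + mu u E • ω := by
    funext u; exact gam_eq hRω u s
  rw [hfun]
  have hder := (((hσ.mul_const (Real.cos s)).smul_const (R ω (vec3 1 0 0))).add
    ((hσ.mul_const (Real.sin s)).smul_const (R ω (vec3 0 1 0)))).add (hμ.smul_const ω)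
  have hvec : dgamE' R t E ω s =
      (-(mu t E) * muD E t / Real.sqrt (1 - mu t E ^ 2) * Real.cos s) •
          R ω (vec3 1 0 0)
        + (-(mu t E) * muD E t / Real.sqrt (1 - mu t E ^ 2) * Real.sin s) •
          R ω (vec3 0 1 0)
        + muD E t • ω := by
    rw [dgamE', deriv_mu hE (hE.trans ht), vec3_decomp]
    simp only [map_add, _root_.map_smul, hRω, smul_add, smul_smul, one_smul]
    congr 2 <;> ring_nf
  rw [hvec]
  exact hder

lemma continuousAt_gam (hE : 0 < E) (ht : 0 < t) (s : ℝ) :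
    ContinuousAt (fun u => gam R u E ω s) t := by
  have hσ : ContinuousAt (fun u => Real.sqrt (1 - mu u E ^ 2)) t :=
    (continuousOn_sig hE).continuousAt (Ioi_mem_nhds ht)
  have hμ : ContinuousAt (fun u => mu u E) t :=
    (continuousOn_mu hE).continuousAt (Ioi_mem_nhds ht)
  apply ContinuousAt.comp (R ω).continuous.continuousAt
  have : ContinuousAt (fun u => (![Real.sqrt (1 - mu u E ^ 2) * Real.cos s,
      Real.sqrt (1 - mu u E ^ 2) * Real.sin s, mu u E] : Fin 3 → ℝ)) t := by
    apply continuousAt_pi.2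
    intro i
    fin_cases i
    · exact hσ.mul continuousAt_const
    · exact hσ.mul continuousAt_const
    · exact hμ
  exact (EuclideanSpace.equiv (Fin 3) ℝ).symm.continuous.continuousAt.comp this

lemma continuous_gam_s (R : E3 → (E3 ≃ₗᵢ[ℝ] E3)) (ω : E3) (t E : ℝ) :
    Continuous (fun s => gam R t E ω s) := by
  apply (R ω).continuous.comp
  have : Continuous (fun s => (![Real.sqrt (1 - mu t E ^ 2) * Real.cos s,
      Real.sqrt (1 - mu t E ^ 2) * Real.sin s, mu t E] : Fin 3 → ℝ)) := by
    apply continuous_pi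
    intro i
    fin_cases i <;> simp <;> fun_prop
  exact (EuclideanSpace.equiv (Fin 3) ℝ).symm.continuous.comp this

end Gamma
/-- `ψ ∈ C(Ḡ, C^m(I, C^n(ℝ³)))`: joint continuity, `m` continuous `E`-derivatives on `I`,
each of which is `Cⁿ` in the spatial variable with jointly continuous spatial derivatives. -/
def MixedReg (m n : ℕ) (GC : Set E3) (I : Set ℝ) (ψ : E3 → E3 → ℝ → ℝ) : Prop :=
  ContinuousOn (fun p : E3 × E3 × ℝ => ψ p.1 p.2.1 p.2.2)
    (GC ×ˢ (Set.univ : Set E3) ×ˢ I) ∧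
  (∀ x ∈ GC, ∀ y : E3, ContDiffOn ℝ m (fun E => ψ x y E) I) ∧
  (∀ x ∈ GC, ∀ j : ℕ, j ≤ m → ∀ E ∈ I,
    ContDiff ℝ n (fun y => iteratedDerivWithin j (fun t => ψ x y t) I E)) ∧
  (∀ x ∈ GC, ∀ j k : ℕ, j ≤ m → k ≤ n →
    ContinuousOn (fun p : E3 × ℝ =>
      iteratedFDeriv ℝ k (fun y => iteratedDerivWithin j (fun t => ψ x y t) I p.2) p.1)
      ((Set.univ : Set E3) ×ˢ I))

set_option maxHeartbeats 4000000 in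
/-- for `ψ ∈ C(Ḡ, C²(I, C³(ℝ³)))`, `x ∈ Ḡ`, `ω ∈ S`, `E ∈ [E₀,E_m)`, the
function `F(E') = ∫_0^{2π} ψ(x, γ(E',E,ω)(s), E') ds` is differentiable on `(E,E_m)` with
`F'(E') = ∫_0^{2π} ⟨∇_yψ(x,γ(E',E,ω)(s),E'), ∂γ/∂E'⟩ ds + ∫_0^{2π} ∂ψ/∂E(x,γ(...),E') ds`,
the gradient term has a limit `L` as `E' → E⁺`, and `F` has right derivative
`2π·(∂ψ/∂E)(x,ω,E) + L` at `E`. -/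
theorem stmt9 (G : Set E3) (hGopen : IsOpen G) (hGbdd : Bornology.IsBounded G)
    (E₀ Em : ℝ) (hE₀ : 0 < E₀) (hI : E₀ < Em)
    (ψ : E3 → E3 → ℝ → ℝ)
    (hψ : MixedReg 2 3 (closure G) (Set.Icc E₀ Em) ψ)
    (R : E3 → (E3 ≃ₗᵢ[ℝ] E3)) (hR : ∀ ω : E3, ‖ω‖ = 1 → R ω e₃ = ω)
    (x : E3) (hx : x ∈ closure G) (ω : E3) (hω : ‖ω‖ = 1)
    (E : ℝ) (hE : E ∈ Set.Ico E₀ Em) :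
    (∀ E' ∈ Set.Ioo E Em,
      HasDerivAt (fun t => ∫ s in (0:ℝ)..(2 * π), ψ x (gam R t E ω s) t)
        ((∫ s in (0:ℝ)..(2 * π),
            (inner ℝ (gradient (fun y => ψ x y E') (gam R E' E ω s)) (dgamE' R E' E ω s) : ℝ))
          + ∫ s in (0:ℝ)..(2 * π),
              derivWithin (fun u => ψ x (gam R E' E ω s) u) (Set.Icc E₀ Em) E') E') ∧
    ∃ L : ℝ,
      Tendsto (fun E' => ∫ s in (0:ℝ)..(2 * π),
          (inner ℝ (gradient (fun y => ψ x y E') (gam R E' E ω s)) (dgamE' R E' E ω s) : ℝ))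
        (𝓝[>] E) (𝓝 L) ∧
      HasDerivWithinAt (fun t => ∫ s in (0:ℝ)..(2 * π), ψ x (gam R t E ω s) t)
        (2 * π * derivWithin (fun u => ψ x ω u) (Set.Icc E₀ Em) E + L) (Set.Ici E) E := by
  obtain ⟨hψc, hψE, hψy, hψj⟩ := hψ
  obtain ⟨hEE₀, hEEm⟩ := hE
  have hE0 : 0 < E := lt_of_lt_of_le hE₀ hEE₀
  set I : Set ℝ := Set.Icc E₀ Em with hIdef
  have hUD : UniqueDiffOn ℝ I := uniqueDiffOn_Icc hI
  have hEI : E ∈ I := ⟨hEE₀, hEEm.le⟩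
  have hIocI : Set.Ioc E Em ⊆ I := fun t ht => ⟨hEE₀.trans ht.1.le, ht.2⟩
  have hIooI : Set.Ioo E Em ⊆ I := fun t ht => ⟨hEE₀.trans ht.1.le, ht.2.le⟩
  have hIpos : ∀ t ∈ I, (0:ℝ) < t := fun t ht => lt_of_lt_of_le hE₀ ht.1
  have hRω : R ω e₃ = ω := hR ω hω
  -- abbreviations
  set γ : ℝ → ℝ → E3 := fun t s => gam R t E ω s with hγdef
  set f1 : E3 → ℝ → ℝ := fun y u => iteratedDerivWithin 1 (fun t => ψ x y t) I u with hf1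
  set D1 : E3 → ℝ → (E3 →L[ℝ] ℝ) := fun y u => fderiv ℝ (fun y' => ψ x y' u) y with hD1d
  set D2 : E3 → ℝ → (E3 →L[ℝ] (E3 →L[ℝ] ℝ)) :=
    fun y u => fderiv ℝ (fun y' => D1 y' u) y with hD2d
  set Dapp : E3 → ℝ → E3 → E3 → ℝ :=
    fun y u a b => iteratedFDeriv ℝ 2 (fun y' => ψ x y' u) y ![a, b] with hDappd
  set b₁ : E3 := R ω (vec3 1 0 0) with hb₁
  set b₂ : E3 := R ω (vec3 0 1 0) with hb₂
  set σ : ℝ → ℝ := fun t => Real.sqrt (1 - mu t E ^ 2) with hσd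
  set τ : ℝ → ℝ := fun t => -Real.sqrt ((1 - mu t E) / (1 + mu t E)) with hτd
  set v : ℝ → E3 := fun s => Real.cos s • b₁ + Real.sin s • b₂ with hvd
  set w : ℝ → ℝ → E3 := fun t s => v s + τ t • ω with hwd
  set Q : ℝ → ℝ → ℝ :=
    fun t s => ∫ r in (0:ℝ)..1, Dapp (ω + r • (γ t s - ω)) t (w t s) (v s) with hQd
  set Φ : ℝ → ℝ → ℝ :=
    fun t s => muD E t * (-(mu t E) * Q t s + D1 (γ t s) t ω) with hΦd
  -- regularity in y
  have hCy : ∀ u ∈ I, ContDiff ℝ 3 (fun y => ψ x y u) := by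
    intro u hu
    simpa using hψy x hx 0 (by norm_num) u hu
  have hC1y : ∀ u ∈ I, ContDiff ℝ 3 (fun y => f1 y u) := fun u hu =>
    hψy x hx 1 (by norm_num) u hu
  have hD1def : ∀ u ∈ I, ∀ y : E3, HasFDerivAt (fun y' => ψ x y' u) (D1 y u) y := by
    intro u hu y
    exact (((hCy u hu).differentiable (by norm_num)) y).hasFDerivAt
  have hD1cont : ContinuousOn (fun p : E3 × ℝ => D1 p.1 p.2) (Set.univ ×ˢ I) := by
    have h := hψj x hx 0 1 (by norm_num) (by norm_num)
    simp only [iteratedDerivWithin_zero] at h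
    have heq : ∀ p : E3 × ℝ, D1 p.1 p.2 =
        (continuousMultilinearCurryFin1 ℝ E3 ℝ)
          (iteratedFDeriv ℝ 1 (fun y => ψ x y p.2) p.1) := by
      intro p
      ext vv
      simp [hD1d, iteratedFDeriv_one_apply, Fin.snoc]
    refine ContinuousOn.congr ?_ (fun p _ => heq p)
    exact (continuousMultilinearCurryFin1 ℝ E3 ℝ).continuous.comp_continuousOn h
  have hItF2 : ContinuousOn
      (fun p : E3 × ℝ => iteratedFDeriv ℝ 2 (fun y => ψ x y p.2) p.1) (Set.univ ×ˢ I) := by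
    have h := hψj x hx 0 2 (by norm_num) (by norm_num)
    simpa only [iteratedDerivWithin_zero] using h
  have hf1cont : ContinuousOn (fun p : E3 × ℝ => f1 p.1 p.2) (Set.univ ×ˢ I) := by
    have h := hψj x hx 1 0 (by norm_num) (by norm_num)
    have heq : ∀ p : E3 × ℝ, f1 p.1 p.2 =
        (continuousMultilinearCurryFin0 ℝ E3 ℝ)
          (iteratedFDeriv ℝ 0 (fun y => f1 y p.2) p.1) := by
      intro p
      simp [iteratedFDeriv_zero_apply]
    refine ContinuousOn.congr ?_ (fun p _ => heq p)
    exact (continuousMultilinearCurryFin0 ℝ E3 ℝ).continuous.comp_continuousOn h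
  have hψxc : ContinuousOn (fun p : E3 × ℝ => ψ x p.1 p.2) (Set.univ ×ˢ I) := by
    have hmap : Continuous (fun p : E3 × ℝ => ((x, (p.1, p.2)) : E3 × E3 × ℝ)) := by
      fun_prop
    have := hψc.comp hmap.continuousOn
      (fun p (hp : p ∈ (Set.univ : Set E3) ×ˢ I) => ⟨hx, Set.mem_univ _, hp.2⟩)
    exact this
  have hDappD2 : ∀ (y : E3) (u : ℝ) (a b : E3), Dapp y u a b = D2 y u a b := by
    intro y u a b
    have h1 : Dapp y u a b = fderiv ℝ (fderiv ℝ (fun y' => ψ x y' u)) y a b := by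
      simp only [hDappd]
      rw [iteratedFDeriv_two_apply]
      simp
    rw [h1]
  have hD1ydiff : ∀ u ∈ I, ∀ y : E3, HasFDerivAt (fun y' => D1 y' u) (D2 y u) y := by
    intro u hu y
    have h2 : ContDiff ℝ 2 (fderiv ℝ (fun y' => ψ x y' u)) :=
      (hCy u hu).fderiv_right (by norm_num)
    have : DifferentiableAt ℝ (fun y' => D1 y' u) y := by
      have := (h2.differentiable (by norm_num)) y
      exact this
    exact this.hasFDerivAt
  -- bounds
  have hK2 : IsCompact ((Metric.closedBall (0:E3) 5) ×ˢ I) :=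
    (isCompact_closedBall _ _).prod isCompact_Icc
  have hK2sub : (Metric.closedBall (0:E3) 5) ×ˢ I ⊆ Set.univ ×ˢ I :=
    fun p hp => ⟨Set.mem_univ _, hp.2⟩
  obtain ⟨M0, hM0⟩ : ∃ M, ∀ p ∈ (Metric.closedBall (0:E3) 5) ×ˢ I,
      ‖ψ x p.1 p.2‖ ≤ M :=
    hK2.exists_bound_of_continuousOn (hψxc.mono hK2sub)
  obtain ⟨M1, hM1⟩ : ∃ M, ∀ p ∈ (Metric.closedBall (0:E3) 5) ×ˢ I,
      ‖D1 p.1 p.2‖ ≤ M :=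
    hK2.exists_bound_of_continuousOn (hD1cont.mono hK2sub)
  obtain ⟨M2, hM2⟩ : ∃ M, ∀ p ∈ (Metric.closedBall (0:E3) 5) ×ˢ I,
      ‖iteratedFDeriv ℝ 2 (fun y => ψ x y p.2) p.1‖ ≤ M :=
    hK2.exists_bound_of_continuousOn (hItF2.mono hK2sub)
  obtain ⟨Mf1, hMf1⟩ : ∃ M, ∀ p ∈ (Metric.closedBall (0:E3) 5) ×ˢ I,
      ‖f1 p.1 p.2‖ ≤ M :=
    hK2.exists_bound_of_continuousOn (hf1cont.mono hK2sub)
  obtain ⟨Mm, hMm⟩ : ∃ M, ∀ t ∈ Set.Icc E Em, |muD E t| ≤ M := by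
    have hsub : Set.Icc E Em ⊆ Set.Ioi 0 := fun t ht => hE0.trans_le ht.1
    exact isCompact_Icc.exists_bound_of_continuousOn ((continuousOn_muD hE0).mono hsub)
  -- geometric facts
  have hnormb₁ : ‖b₁‖ = 1 := by rw [hb₁, (R ω).norm_map]; exact norm_vec3_unit₁
  have hnormb₂ : ‖b₂‖ = 1 := by rw [hb₂, (R ω).norm_map]; exact norm_vec3_unit₂
  have hnormv : ∀ s, ‖v s‖ ≤ 2 := by
    intro s
    refine le_trans (norm_add_le _ _) ?_
    rw [norm_smul, norm_smul, hnormb₁, hnormb₂]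
    have h1 := Real.abs_cos_le_one s
    have h2 := Real.abs_sin_le_one s
    simp only [Real.norm_eq_abs, mul_one]
    linarith
  have hμcont : ContinuousAt (fun t => mu t E) E :=
    (continuousOn_mu hE0).continuousAt (Ioi_mem_nhds hE0)
  have hτ0 : τ E = 0 := by
    rw [hτd]; simp [mu_self hE0]
  have hτle : ∀ t, E ≤ t → |τ t| ≤ 1 := by
    intro t ht
    have hμ0 := (mu_pos hE0 (hE0.trans_le ht)).le
    have hμ1 := mu_le_one hE0 ht
    rw [hτd, abs_neg, abs_of_nonneg (Real.sqrt_nonneg _)]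
    apply Real.sqrt_le_one.mpr
    rw [div_le_one (by linarith)]
    linarith
  have hτcont : ContinuousAt τ E := by
    rw [hτd]
    apply ContinuousAt.neg
    apply Real.continuous_sqrt.continuousAt.comp
    apply ContinuousAt.div
    · exact continuousAt_const.sub hμcont
    · exact continuousAt_const.add hμcont
    · rw [mu_self hE0]; norm_num
  have hnormw : ∀ t s, E ≤ t → ‖w t s‖ ≤ 3 := by
    intro t s ht
    refine le_trans (norm_add_le _ _) ?_
    have h1 := hnormv s
    have h2 := hτle t ht
    rw [norm_smul, hω]
    simp only [Real.norm_eq_abs, mul_one]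
    linarith
  have hwE : ∀ s, w E s = v s := by intro s; rw [hwd]; simp [hτ0]
  have hστ : ∀ t, E ≤ t → σ t * τ t = mu t E - 1 := by
    intro t ht
    have hμ1 := mu_le_one hE0 ht
    have hμ0 := (mu_pos hE0 (hE0.trans_le ht)).le
    have h1 : (0:ℝ) < 1 + mu t E := by linarith
    have h2 : (0:ℝ) ≤ 1 - mu t E ^ 2 := by nlinarith
    have heq : (1 - mu t E ^ 2) * ((1 - mu t E) / (1 + mu t E)) = (1 - mu t E) ^ 2 := by
      field_simp
      ring
    have h4 : Real.sqrt (1 - mu t E ^ 2) * Real.sqrt ((1 - mu t E) / (1 + mu t E))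
        = Real.sqrt ((1 - mu t E ^ 2) * ((1 - mu t E) / (1 + mu t E))) :=
      (Real.sqrt_mul h2 _).symm
    rw [hσd, hτd, mul_neg, h4, heq, Real.sqrt_sq (by linarith)]
    ring
  have hγself : ∀ s, γ E s = ω := fun s => gam_self hE0 hRω s
  have hγnorm : ∀ t s, E ≤ t → ‖γ t s‖ ≤ 3 := fun t s ht => norm_gam_le hE0 ht s
  have hγdec : ∀ t s, E ≤ t → γ t s - ω = σ t • w t s := by
    intro t s ht
    have h1 : γ t s = (σ t * Real.cos s) • b₁ + (σ t * Real.sin s) • b₂ + mu t E • ω :=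
      gam_eq hRω t s
    rw [h1, hwd, hvd]
    rw [smul_add, smul_add, smul_smul, smul_smul, smul_smul, hστ t ht]
    rw [sub_smul, one_smul]
    abel
  have hseg : ∀ t s (r : ℝ), E ≤ t → r ∈ Set.uIcc (0:ℝ) 1 →
      ω + r • (γ t s - ω) ∈ Metric.closedBall (0:E3) 5 := by
    intro t s r ht hr
    rw [Metric.mem_closedBall, dist_zero_right]
    have hr1 : |r| ≤ 1 := by
      rw [Set.uIcc_of_le (by norm_num : (0:ℝ) ≤ 1)] at hr
      rw [abs_le]; constructor <;> linarith [hr.1, hr.2]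
    refine le_trans (norm_add_le _ _) ?_
    have h2 : ‖r • (γ t s - ω)‖ ≤ 4 := by
      rw [norm_smul]
      have h3 : ‖γ t s - ω‖ ≤ 4 := by
        refine le_trans (norm_sub_le _ _) ?_
        rw [hω]
        linarith [hγnorm t s ht]
      calc ‖r‖ * ‖γ t s - ω‖ ≤ 1 * 4 := by
            apply mul_le_mul _ h3 (norm_nonneg _) zero_le_one
            simpa using hr1
        _ = 4 := by norm_num
    rw [hω]
    linarith
  -- FTC along segments
  have hDappcont_r : ∀ t ∈ I, ∀ (z a b : E3),
      Continuous (fun r : ℝ => Dapp (ω + r • (z - ω)) t a b) := by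
    intro t ht z a b
    have hit : Continuous (iteratedFDeriv ℝ 2 (fun y => ψ x y t)) :=
      (hCy t ht).continuous_iteratedFDeriv (by norm_num)
    have hline : Continuous (fun r : ℝ => ω + r • (z - ω)) := by fun_prop
    have hp : Continuous (fun r : ℝ =>
        ((iteratedFDeriv ℝ 2 (fun y => ψ x y t) (ω + r • (z - ω))),
          (![a, b] : Fin 2 → E3))) := (hit.comp hline).prodMk continuous_const
    exact continuous_eval.comp hp
  have hFTC : ∀ u ∈ I, ∀ (z c : E3), D1 z u c - D1 ω u c =
      ∫ r in (0:ℝ)..1, Dapp (ω + r • (z - ω)) u (z - ω) c := by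
    intro u hu z c
    have hline : ∀ r : ℝ, HasDerivAt (fun r' : ℝ => ω + r' • (z - ω)) (z - ω) r := by
      intro r
      simpa using ((hasDerivAt_id r).smul_const (z - ω)).const_add ω
    have hh : ∀ r : ℝ, HasDerivAt (fun r' => D1 (ω + r' • (z - ω)) u c)
        (Dapp (ω + r • (z - ω)) u (z - ω) c) r := by
      intro r
      have h1 := hD1ydiff u hu (ω + r • (z - ω))
      have h2 : HasFDerivAt (fun y' => D1 y' u c)
          ((ContinuousLinearMap.apply ℝ ℝ c).comp (D2 (ω + r • (z - ω)) u))
          (ω + r • (z - ω)) :=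
        (ContinuousLinearMap.apply ℝ ℝ c).hasFDerivAt.comp _ h1
      have h3 := h2.comp_hasDerivAt r (hline r)
      have h4 : ((ContinuousLinearMap.apply ℝ ℝ c).comp (D2 (ω + r • (z - ω)) u)) (z - ω)
          = Dapp (ω + r • (z - ω)) u (z - ω) c := by
        rw [hDappD2]
        rfl
      rw [h4] at h3
      exact h3
    have hint : IntervalIntegrable (fun r => Dapp (ω + r • (z - ω)) u (z - ω) c)
        MeasureTheory.volume 0 1 := (hDappcont_r u hu z _ c).intervalIntegrable _ _
    have heval := intervalIntegral.integral_eq_sub_of_hasDerivAt (fun r _ => hh r) hint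
    rw [heval]
    simp
  have hQi : ∀ t ∈ Set.Ioc E Em, ∀ (s : ℝ) (c : E3),
      D1 (γ t s) t c = D1 ω t c +
        σ t * ∫ r in (0:ℝ)..1, Dapp (ω + r • (γ t s - ω)) t (w t s) c := by
    intro t ht s c
    have hFTC' := hFTC t (hIocI ht) (γ t s) c
    have hgd := hγdec t s ht.1.le
    have hcongr : ∀ r : ℝ, Dapp (ω + r • (γ t s - ω)) t (γ t s - ω) c
        = σ t * Dapp (ω + r • (γ t s - ω)) t (w t s) c := by
      intro r
      rw [hDappD2, hDappD2, hgd]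
      rw [ContinuousLinearMap.map_smul]
      simp
    rw [intervalIntegral.integral_congr (g := fun r =>
      σ t * Dapp (ω + r • (γ t s - ω)) t (w t s) c) (fun r _ => hcongr r)] at hFTC'
    rw [intervalIntegral.integral_const_mul] at hFTC'
    linarith
  -- the inner product with the gradient is D1 applied
  have hinner : ∀ t s, (inner ℝ (gradient (fun y => ψ x y t) (γ t s)) (dgamE' R t E ω s) : ℝ)
      = D1 (γ t s) t (dgamE' R t E ω s) := by
    intro t s
    rw [gradient]
    exact InnerProductSpace.toDual_symm_apply
  -- decomposition of dgamE'
  have hdgam : ∀ t ∈ Set.Ioo E Em, ∀ s : ℝ, dgamE' R t E ω s =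
      muD E t • ((-(mu t E) * Real.cos s / σ t) • b₁
        + (-(mu t E) * Real.sin s / σ t) • b₂ + ω) := by
    intro t ht s
    rw [dgamE', deriv_mu hE0 (hE0.trans ht.1), vec3_decomp]
    simp only [map_add, _root_.map_smul, hRω, one_smul, hb₁, hb₂, hσd]
  have hnormdgam : ∀ t ∈ Set.Ioo E Em, ∀ s : ℝ,
      ‖dgamE' R t E ω s‖ ≤ |muD E t| * (2 / σ t + 1) := by
    intro t ht s
    rw [hdgam t ht s]
    rw [norm_smul, Real.norm_eq_abs]
    apply mul_le_mul_of_nonneg_left _ (abs_nonneg _)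
    have hσpos := sig_pos hE0 ht.1
    have hμ1 := mu_le_one hE0 ht.1.le
    have hμ0 := (mu_pos hE0 (hE0.trans ht.1)).le
    have hc := Real.abs_cos_le_one s
    have hsn := Real.abs_sin_le_one s
    refine le_trans (norm_add_le _ _) ?_
    have h1 : ‖(-(mu t E) * Real.cos s / σ t) • b₁
        + (-(mu t E) * Real.sin s / σ t) • b₂‖ ≤ 2 / σ t := by
      refine le_trans (norm_add_le _ _) ?_
      rw [norm_smul, norm_smul, hnormb₁, hnormb₂, mul_one, mul_one]
      have hcb : |(-(mu t E) * Real.cos s / σ t)| ≤ 1 / σ t := by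
        rw [abs_div, abs_of_pos hσpos]
        apply (div_le_div_iff_of_pos_right hσpos).mpr
        rw [abs_mul, abs_neg, abs_of_nonneg hμ0]
        nlinarith
      have hsb : |(-(mu t E) * Real.sin s / σ t)| ≤ 1 / σ t := by
        rw [abs_div, abs_of_pos hσpos]
        apply (div_le_div_iff_of_pos_right hσpos).mpr
        rw [abs_mul, abs_neg, abs_of_nonneg hμ0]
        nlinarith
      have h2 : 2 / σ t = 1 / σ t + 1 / σ t := by ring
      rw [h2]
      simp only [Real.norm_eq_abs]
      linarith
    rw [hω]
    linarith
  -- continuity in s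
  have hvcont : Continuous v := by
    rw [hvd]
    exact (Real.continuous_cos.smul continuous_const).add
      (Real.continuous_sin.smul continuous_const)
  have hwcont : ∀ t, Continuous (fun s => w t s) := by
    intro t
    rw [hwd]
    exact hvcont.add continuous_const
  have hγscont : ∀ t, Continuous (fun s => γ t s) := fun t => continuous_gam_s R ω t E
  have hγmem : ∀ t ∈ I, ∀ s, (γ t s, t) ∈ (Set.univ : Set E3) ×ˢ I :=
    fun t ht s => ⟨Set.mem_univ _, ht⟩
  have hD1γcont : ∀ t ∈ I, Continuous (fun s => D1 (γ t s) t) := by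
    intro t ht
    exact hD1cont.comp_continuous ((hγscont t).prodMk continuous_const) (hγmem t ht)
  have hD1γωcont : ∀ t ∈ I, Continuous (fun s => D1 (γ t s) t ω) := by
    intro t ht
    exact (ContinuousLinearMap.apply ℝ ℝ ω).continuous.comp (hD1γcont t ht)
  have hQcont : ∀ t ∈ I, Continuous (fun s => Q t s) := by
    intro t ht
    rw [hQd]
    apply intervalIntegral.continuous_parametric_intervalIntegral_of_continuous'
    have hit : Continuous (iteratedFDeriv ℝ 2 (fun y => ψ x y t)) :=
      (hCy t ht).continuous_iteratedFDeriv (by norm_num)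
    have hpt : Continuous (fun p : ℝ × ℝ => ω + p.2 • (γ t p.1 - ω)) := by
      apply continuous_const.add
      exact continuous_snd.smul (((hγscont t).comp continuous_fst).sub continuous_const)
    have hargs : Continuous (fun p : ℝ × ℝ => (![w t p.1, v p.1] : Fin 2 → E3)) := by
      apply continuous_pi
      intro i
      fin_cases i
      · exact (hwcont t).comp continuous_fst
      · exact hvcont.comp continuous_fst
    exact continuous_eval.comp (((hit.comp hpt)).prodMk hargs)
  have hΦconts : ∀ t ∈ I, Continuous (fun s => Φ t s) := by
    intro t ht
    rw [hΦd]
    apply continuous_const.mul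
    exact (continuous_const.mul (hQcont t ht)).add (hD1γωcont t ht)
  -- Q in terms of components
  have hQv : ∀ t ∈ Set.Ioc E Em, ∀ s : ℝ, Q t s =
      Real.cos s * (∫ r in (0:ℝ)..1, Dapp (ω + r • (γ t s - ω)) t (w t s) b₁)
      + Real.sin s * (∫ r in (0:ℝ)..1, Dapp (ω + r • (γ t s - ω)) t (w t s) b₂) := by
    intro t ht s
    have hco : ∀ r : ℝ, Dapp (ω + r • (γ t s - ω)) t (w t s) (v s)
        = Real.cos s * Dapp (ω + r • (γ t s - ω)) t (w t s) b₁
          + Real.sin s * Dapp (ω + r • (γ t s - ω)) t (w t s) b₂ := by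
      intro r
      rw [hDappD2, hDappD2, hDappD2, hvd]
      simp
    rw [hQd]
    simp only []
    rw [intervalIntegral.integral_congr (fun r _ => hco r)]
    rw [intervalIntegral.integral_add
      (((hDappcont_r t (hIocI ht) _ _ _).intervalIntegrable _ _).const_mul _)
      (((hDappcont_r t (hIocI ht) _ _ _).intervalIntegrable _ _).const_mul _)]
    rw [intervalIntegral.integral_const_mul, intervalIntegral.integral_const_mul]
  -- pointwise formula for the gradient integrand
  have hpointwise : ∀ t ∈ Set.Ioo E Em, ∀ s : ℝ,
      (inner ℝ (gradient (fun y => ψ x y t) (γ t s)) (dgamE' R t E ω s) : ℝ)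
      = Φ t s + muD E t * (-(mu t E) / σ t)
          * (Real.cos s * D1 ω t b₁ + Real.sin s * D1 ω t b₂) := by
    intro t ht s
    have htoc : t ∈ Set.Ioc E Em := ⟨ht.1, ht.2.le⟩
    have hσpos := sig_pos hE0 ht.1
    have hσne : σ t ≠ 0 := by rw [hσd]; exact hσpos.ne'
    rw [hinner t s, hdgam t ht s]
    simp only [_root_.map_smul, map_add, smul_eq_mul]
    simp only [hΦd]
    rw [hQi t htoc s b₁, hQi t htoc s b₂, hQv t htoc s]
    field_simp
    ring
  -- the trigonometric part integrates to zero
  have hextra0 : ∀ (k A B : ℝ),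
      (∫ s in (0:ℝ)..(2*π), k * (Real.cos s * A + Real.sin s * B)) = 0 := by
    intro k A B
    rw [intervalIntegral.integral_const_mul]
    rw [intervalIntegral.integral_add
      ((Real.continuous_cos.intervalIntegrable _ _).mul_const _)
      ((Real.continuous_sin.intervalIntegrable _ _).mul_const _)]
    rw [intervalIntegral.integral_mul_const, intervalIntegral.integral_mul_const,
      integral_cos, integral_sin]
    simp [Real.sin_two_pi, Real.cos_two_pi]
  -- the gradient integral equals the integral of Φ
  have hgradterm_eq : ∀ t ∈ Set.Ioo E Em,
      (∫ s in (0:ℝ)..(2*π),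
        (inner ℝ (gradient (fun y => ψ x y t) (γ t s)) (dgamE' R t E ω s) : ℝ))
      = ∫ s in (0:ℝ)..(2*π), Φ t s := by
    intro t ht
    rw [intervalIntegral.integral_congr (fun s _ => hpointwise t ht s)]
    rw [intervalIntegral.integral_add (f := fun s => Φ t s)
      (g := fun s => muD E t * (-(mu t E) / σ t) * (Real.cos s * D1 ω t b₁ + Real.sin s * D1 ω t b₂))
      ((hΦconts t (hIooI ht)).intervalIntegrable _ _)
      ((continuous_const.mul ((Real.continuous_cos.mul continuous_const).add
        (Real.continuous_sin.mul continuous_const))).intervalIntegrable _ _)]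
    rw [hextra0]
    ring
  -- nonnegativity of bounds and Dapp bound
  have hωball : ω ∈ Metric.closedBall (0:E3) 5 := by
    rw [Metric.mem_closedBall, dist_zero_right, hω]; norm_num
  have hγball : ∀ t s, E ≤ t → γ t s ∈ Metric.closedBall (0:E3) 5 := by
    intro t s ht
    rw [Metric.mem_closedBall, dist_zero_right]
    linarith [hγnorm t s ht]
  have hM1nn : 0 ≤ M1 := le_trans (norm_nonneg _) (hM1 (ω, E) ⟨hωball, hEI⟩)
  have hM2nn : 0 ≤ M2 := le_trans (norm_nonneg _) (hM2 (ω, E) ⟨hωball, hEI⟩)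
  have hMmnn : 0 ≤ Mm := le_trans (abs_nonneg _) (hMm E ⟨le_refl E, hEEm.le⟩)
  have hDappbound : ∀ t ∈ I, ∀ y ∈ Metric.closedBall (0:E3) 5, ∀ a b : E3,
      |Dapp y t a b| ≤ M2 * ‖a‖ * ‖b‖ := by
    intro t ht y hy a b
    simp only [hDappd]
    rw [← Real.norm_eq_abs]
    have h1 := (iteratedFDeriv ℝ 2 (fun y' => ψ x y' t) y).le_opNorm ![a, b]
    have h2 : (∏ i, ‖(![a, b] : Fin 2 → E3) i‖) = ‖a‖ * ‖b‖ := by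
      rw [Fin.prod_univ_two]; simp
    rw [h2] at h1
    refine le_trans h1 ?_
    rw [mul_assoc]
    exact mul_le_mul_of_nonneg_right (hM2 (y, t) ⟨hy, ht⟩) (by positivity)
  have hQbound : ∀ t ∈ Set.Ioc E Em, ∀ s : ℝ, |Q t s| ≤ M2 * 6 := by
    intro t ht s
    simp only [hQd]
    rw [← Real.norm_eq_abs]
    have hb : ∀ r ∈ Set.uIoc (0:ℝ) 1,
        ‖Dapp (ω + r • (γ t s - ω)) t (w t s) (v s)‖ ≤ M2 * 3 * 2 := by
      intro r hr
      have hrI : r ∈ Set.uIcc (0:ℝ) 1 := by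
        rw [Set.uIoc_of_le (by norm_num : (0:ℝ) ≤ 1)] at hr
        rw [Set.uIcc_of_le (by norm_num : (0:ℝ) ≤ 1)]
        exact Set.Ioc_subset_Icc_self hr
      rw [Real.norm_eq_abs]
      refine le_trans (hDappbound t (hIocI ht) _ (hseg t s r ht.1.le hrI) _ _) ?_
      have h1 := hnormw t s ht.1.le
      have h2 := hnormv s
      have h3 : M2 * ‖w t s‖ * ‖v s‖ ≤ M2 * 3 * ‖v s‖ :=
        mul_le_mul_of_nonneg_right (mul_le_mul_of_nonneg_left h1 hM2nn) (norm_nonneg _)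
      have h4 : M2 * 3 * ‖v s‖ ≤ M2 * 3 * 2 :=
        mul_le_mul_of_nonneg_left h2 (by positivity)
      linarith
    refine le_trans (intervalIntegral.norm_integral_le_of_norm_le_const hb) ?_
    rw [show |(1:ℝ) - 0| = 1 by norm_num]
    linarith
  have hΦbound : ∀ t ∈ Set.Ioc E Em, ∀ s : ℝ, |Φ t s| ≤ Mm * (M2 * 6 + M1) := by
    intro t ht s
    simp only [hΦd]
    rw [abs_mul]
    have h1 := hMm t ⟨ht.1.le, ht.2⟩
    have h2 := hQbound t ht s
    have h3 : |D1 (γ t s) t ω| ≤ M1 := by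
      rw [← Real.norm_eq_abs]
      refine le_trans ((D1 (γ t s) t).le_opNorm ω) ?_
      rw [hω, mul_one]
      exact hM1 (γ t s, t) ⟨hγball t s ht.1.le, hIocI ht⟩
    have h4 : |-(mu t E) * Q t s + D1 (γ t s) t ω| ≤ M2 * 6 + M1 := by
      refine le_trans (abs_add_le _ _) ?_
      have h5 : |-(mu t E) * Q t s| ≤ M2 * 6 := by
        rw [abs_mul, abs_neg, abs_of_nonneg (mu_pos hE0 (hE0.trans ht.1)).le]
        have h6 := mu_le_one hE0 ht.1.le
        have h7 := (mu_pos hE0 (hE0.trans ht.1)).le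
        nlinarith [abs_nonneg (Q t s)]
      linarith
    exact mul_le_mul h1 h4 (abs_nonneg _) hMmnn
  -- limits as t → E⁺
  have hidt : Tendsto (fun t : ℝ => t) (𝓝[>] E) (𝓝 E) :=
    tendsto_id.mono_left nhdsWithin_le_nhds
  have hIocmem : Set.Ioc E Em ∈ 𝓝[>] E := Ioc_mem_nhdsGT_of_mem ⟨le_refl E, hEEm⟩
  have hIoomem : Set.Ioo E Em ∈ 𝓝[>] E := Ioo_mem_nhdsGT_of_mem ⟨le_refl E, hEEm⟩
  have hmemI : ∀ᶠ t in 𝓝[>] E, t ∈ I := by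
    filter_upwards [hIocmem] with t ht
    exact hIocI ht
  have hγt : ∀ s, Tendsto (fun t => γ t s) (𝓝[>] E) (𝓝 (γ E s)) := fun s =>
    ((continuousAt_gam hE0 hE0 s).tendsto).mono_left nhdsWithin_le_nhds
  have hτt : Tendsto τ (𝓝[>] E) (𝓝 (τ E)) := hτcont.tendsto.mono_left nhdsWithin_le_nhds
  have hwt : ∀ s, Tendsto (fun t => w t s) (𝓝[>] E) (𝓝 (w E s)) := by
    intro s
    simp only [hwd]
    exact tendsto_const_nhds.add (hτt.smul_const ω)
  have hmuDt : Tendsto (fun t => muD E t) (𝓝[>] E) (𝓝 (muD E E)) :=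
    (((continuousOn_muD hE0).continuousAt (Ioi_mem_nhds hE0)).tendsto).mono_left
      nhdsWithin_le_nhds
  have hμt : Tendsto (fun t => mu t E) (𝓝[>] E) (𝓝 (mu E E)) :=
    hμcont.tendsto.mono_left nhdsWithin_le_nhds
  have hQtend : ∀ s : ℝ, Tendsto (fun t => Q t s) (𝓝[>] E) (𝓝 (Q E s)) := by
    intro s
    simp only [hQd]
    apply intervalIntegral.tendsto_integral_filter_of_dominated_convergence
      (bound := fun _ => M2 * 3 * 2)
    · filter_upwards [hIocmem] with t ht
      exact (hDappcont_r t (hIocI ht) _ _ _).aestronglyMeasurable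
    · filter_upwards [hIocmem] with t ht
      apply MeasureTheory.ae_of_all
      intro r hr
      have hrI : r ∈ Set.uIcc (0:ℝ) 1 := by
        rw [Set.uIoc_of_le (by norm_num : (0:ℝ) ≤ 1)] at hr
        rw [Set.uIcc_of_le (by norm_num : (0:ℝ) ≤ 1)]
        exact Set.Ioc_subset_Icc_self hr
      rw [Real.norm_eq_abs]
      refine le_trans (hDappbound t (hIocI ht) _ (hseg t s r ht.1.le hrI) _ _) ?_
      have h1 := hnormw t s ht.1.le
      have h2 := hnormv s
      have h3 : M2 * ‖w t s‖ * ‖v s‖ ≤ M2 * 3 * ‖v s‖ :=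
        mul_le_mul_of_nonneg_right (mul_le_mul_of_nonneg_left h1 hM2nn) (norm_nonneg _)
      have h4 : M2 * 3 * ‖v s‖ ≤ M2 * 3 * 2 :=
        mul_le_mul_of_nonneg_left h2 (by positivity)
      linarith
    · exact intervalIntegrable_const
    · apply MeasureTheory.ae_of_all
      intro r _
      have hyt : Tendsto (fun t => ω + r • (γ t s - ω)) (𝓝[>] E)
          (𝓝 (ω + r • (γ E s - ω))) :=
        tendsto_const_nhds.add (((hγt s).sub tendsto_const_nhds).const_smul r)
      have hF2 : Tendsto
          (fun t => iteratedFDeriv ℝ 2 (fun y => ψ x y t) (ω + r • (γ t s - ω)))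
          (𝓝[>] E)
          (𝓝 (iteratedFDeriv ℝ 2 (fun y => ψ x y E) (ω + r • (γ E s - ω)))) :=
        tendsto_comp_jointCont hItF2 hyt hidt hmemI hEI
      have hargs : Tendsto (fun t => (![w t s, v s] : Fin 2 → E3)) (𝓝[>] E)
          (𝓝 (![w E s, v s])) := by
        apply tendsto_pi_nhds.2
        intro i
        fin_cases i
        · simpa using hwt s
        · simpa using (tendsto_const_nhds : Tendsto (fun _ : ℝ => v s) (𝓝[>] E) _)
      exact (continuous_eval.tendsto _).comp (hF2.prodMk_nhds hargs)
  have hΦlimpt : ∀ s : ℝ, Tendsto (fun t => Φ t s) (𝓝[>] E) (𝓝 (Φ E s)) := by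
    intro s
    simp only [hΦd]
    apply Tendsto.mul hmuDt
    apply Tendsto.add
    · exact (hμt.neg).mul (hQtend s)
    · have h1 : Tendsto (fun t => D1 (γ t s) t) (𝓝[>] E) (𝓝 (D1 (γ E s) E)) :=
        tendsto_comp_jointCont hD1cont (hγt s) hidt hmemI hEI
      exact ((ContinuousLinearMap.apply ℝ ℝ ω).continuous.tendsto _).comp h1
  have hLtend : Tendsto (fun t => ∫ s in (0:ℝ)..(2*π), Φ t s) (𝓝[>] E)
      (𝓝 (∫ s in (0:ℝ)..(2*π), Φ E s)) := by
    apply intervalIntegral.tendsto_integral_filter_of_dominated_convergence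
      (bound := fun _ => Mm * (M2 * 6 + M1))
    · filter_upwards [hIocmem] with t ht
      exact (hΦconts t (hIocI ht)).aestronglyMeasurable
    · filter_upwards [hIocmem] with t ht
      apply MeasureTheory.ae_of_all
      intro s _
      rw [Real.norm_eq_abs]
      exact hΦbound t ht s
    · exact intervalIntegrable_const
    · exact MeasureTheory.ae_of_all _ (fun s _ => hΦlimpt s)
  have hgradtend : Tendsto (fun E' => ∫ s in (0:ℝ)..(2*π),
      (inner ℝ (gradient (fun y => ψ x y E') (gam R E' E ω s)) (dgamE' R E' E ω s) : ℝ))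
      (𝓝[>] E) (𝓝 (∫ s in (0:ℝ)..(2*π), Φ E s)) := by
    apply hLtend.congr'
    filter_upwards [hIoomem] with t ht
    exact (hgradterm_eq t ht).symm
  -- second term: integral of f1 along gamma
  have hf1γconts : ∀ t ∈ I, Continuous (fun s => f1 (γ t s) t) := by
    intro t ht
    exact hf1cont.comp_continuous ((hγscont t).prodMk continuous_const) (hγmem t ht)
  have hsectend : Tendsto (fun t => ∫ s in (0:ℝ)..(2*π), f1 (γ t s) t) (𝓝[>] E)
      (𝓝 (∫ s in (0:ℝ)..(2*π), f1 (γ E s) E)) := by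
    apply intervalIntegral.tendsto_integral_filter_of_dominated_convergence
      (bound := fun _ => Mf1)
    · filter_upwards [hIocmem] with t ht
      exact (hf1γconts t (hIocI ht)).aestronglyMeasurable
    · filter_upwards [hIocmem] with t ht
      apply MeasureTheory.ae_of_all
      intro s _
      exact hMf1 (γ t s, t) ⟨hγball t s ht.1.le, hIocI ht⟩
    · exact intervalIntegrable_const
    · apply MeasureTheory.ae_of_all
      intro s _
      exact tendsto_comp_jointCont hf1cont (hγt s) hidt hmemI hEI
  have hf1deriv : f1 ω E = derivWithin (fun u => ψ x ω u) I E := by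
    simp only [hf1]
    rw [iteratedDerivWithin_one]
  have hsecval : (∫ s in (0:ℝ)..(2*π), f1 (γ E s) E) = 2 * π * f1 ω E := by
    rw [intervalIntegral.integral_congr (g := fun _ => f1 ω E)
      (fun s _ => by rw [hγself s])]
    rw [intervalIntegral.integral_const]
    simp only [sub_zero, smul_eq_mul]
  -- continuity of F at E from the right
  have hFtend : Tendsto (fun t => ∫ s in (0:ℝ)..(2*π), ψ x (γ t s) t) (𝓝[>] E)
      (𝓝 (∫ s in (0:ℝ)..(2*π), ψ x (γ E s) E)) := by
    apply intervalIntegral.tendsto_integral_filter_of_dominated_convergence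
      (bound := fun _ => M0)
    · filter_upwards [hIocmem] with t ht
      exact ((hCy t (hIocI ht)).continuous.comp (hγscont t)).aestronglyMeasurable
    · filter_upwards [hIocmem] with t ht
      apply MeasureTheory.ae_of_all
      intro s _
      exact hM0 (γ t s, t) ⟨hγball t s ht.1.le, hIocI ht⟩
    · exact intervalIntegrable_const
    · apply MeasureTheory.ae_of_all
      intro s _
      exact tendsto_comp_jointCont hψxc (hγt s) hidt hmemI hEI
  -- Part 1: differentiation under the integral sign
  have hpart1 : ∀ E' ∈ Set.Ioo E Em,
      HasDerivAt (fun t => ∫ s in (0:ℝ)..(2*π), ψ x (γ t s) t)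
        ((∫ s in (0:ℝ)..(2*π), D1 (γ E' s) E' (dgamE' R E' E ω s))
          + ∫ s in (0:ℝ)..(2*π), f1 (γ E' s) E') E' := by
    intro E' hE'
    set ε : ℝ := min (E' - E) (Em - E') / 2 with hεd
    have hεpos : 0 < ε := by
      rw [hεd]
      have h1 : 0 < E' - E := by linarith [hE'.1]
      have h2 : 0 < Em - E' := by linarith [hE'.2]
      positivity
    have hε1 : ε ≤ (E' - E) / 2 := by
      rw [hεd]
      have := min_le_left (E' - E) (Em - E')
      linarith
    have hε2 : ε ≤ (Em - E') / 2 := by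
      rw [hεd]
      have := min_le_right (E' - E) (Em - E')
      linarith
    have hJsub : Set.Icc (E' - ε) (E' + ε) ⊆ Set.Ioo E Em := by
      intro t ht
      constructor
      · have := ht.1
        have h1 := hE'.1
        linarith
      · have := ht.2
        have h2 := hE'.2
        linarith
    have hballJ : Metric.ball E' ε ⊆ Set.Icc (E' - ε) (E' + ε) := by
      intro t ht
      rw [Metric.mem_ball, Real.dist_eq] at ht
      have := abs_lt.1 ht
      constructor <;> linarith [this.1, this.2]
    have hballIoo : Metric.ball E' ε ⊆ Set.Ioo E Em := fun t ht => hJsub (hballJ ht)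
    -- a positive lower bound for σ on the closed interval
    obtain ⟨t₀, ht₀J, hmin⟩ := isCompact_Icc.exists_isMinOn
      (Set.nonempty_Icc.2 (by linarith))
      ((continuousOn_sig hE0).mono
        (fun t (ht : t ∈ Set.Icc (E' - ε) (E' + ε)) => hIpos t (hIooI (hJsub ht))))
    have hσmpos : 0 < σ t₀ := sig_pos hE0 (hJsub ht₀J).1
    have hσmle : ∀ t ∈ Metric.ball E' ε, σ t₀ ≤ σ t := by
      intro t ht
      exact isMinOn_iff.1 hmin t (hballJ ht)
    -- apply differentiation under the integral sign
    have key := intervalIntegral.hasDerivAt_integral_of_dominated_loc_of_deriv_le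
      (F := fun t s => ψ x (γ t s) t)
      (F' := fun t s => D1 (γ t s) t (dgamE' R t E ω s) + f1 (γ t s) t)
      (a := 0) (b := 2*π) (μ := MeasureTheory.volume) (x₀ := E') (s := Metric.ball E' ε)
      (bound := fun _ => M1 * (Mm * (2 / σ t₀ + 1)) + Mf1) (Metric.ball_mem_nhds E' hεpos) ?_ ?_ ?_ ?_ ?_ ?_
    · obtain ⟨hint, hder⟩ := key
      have heq : (∫ s in (0:ℝ)..(2*π),
          (D1 (γ E' s) E' (dgamE' R E' E ω s) + f1 (γ E' s) E'))
          = (∫ s in (0:ℝ)..(2*π), D1 (γ E' s) E' (dgamE' R E' E ω s))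
            + ∫ s in (0:ℝ)..(2*π), f1 (γ E' s) E' := by
        apply intervalIntegral.integral_add
        · have hc1 : Continuous (fun s => dgamE' R E' E ω s) := by
            have : (fun s => dgamE' R E' E ω s) = fun s =>
                muD E E' • ((-(mu E' E) * Real.cos s / σ E') • b₁
                  + (-(mu E' E) * Real.sin s / σ E') • b₂ + ω) := by
              funext s
              exact hdgam E' hE' s
            rw [this]
            refine Continuous.const_smul (g := fun s => (-(mu E' E) * Real.cos s / σ E') • b₁
              + (-(mu E' E) * Real.sin s / σ E') • b₂ + ω) ?_ (muD E E')
            apply Continuous.add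
            apply Continuous.add
            · exact ((continuous_const.mul Real.continuous_cos).div_const _).smul continuous_const
            · exact ((continuous_const.mul Real.continuous_sin).div_const _).smul continuous_const
            · exact continuous_const
          have hc2 := hD1γcont E' (hIooI hE')
          exact (isBoundedBilinearMap_apply.continuous.comp
            (hc2.prodMk hc1)).intervalIntegrable _ _
        · exact (hf1γconts E' (hIooI hE')).intervalIntegrable _ _
      rw [heq] at hder
      exact hder
    · -- measurability of F t
      filter_upwards [isOpen_Ioo.mem_nhds hE'] with t ht
      exact ((hCy t (hIooI ht)).continuous.comp (hγscont t)).aestronglyMeasurable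
    · -- integrability of F E'
      exact ((hCy E' (hIooI hE')).continuous.comp (hγscont E')).intervalIntegrable _ _
    · -- measurability of F' E'
      have hc1 : Continuous (fun s => dgamE' R E' E ω s) := by
        have : (fun s => dgamE' R E' E ω s) = fun s =>
            muD E E' • ((-(mu E' E) * Real.cos s / σ E') • b₁
              + (-(mu E' E) * Real.sin s / σ E') • b₂ + ω) := by
          funext s
          exact hdgam E' hE' s
        rw [this]
        refine Continuous.const_smul (g := fun s => (-(mu E' E) * Real.cos s / σ E') • b₁
          + (-(mu E' E) * Real.sin s / σ E') • b₂ + ω) ?_ (muD E E')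
        apply Continuous.add
        apply Continuous.add
        · exact ((continuous_const.mul Real.continuous_cos).div_const _).smul continuous_const
        · exact ((continuous_const.mul Real.continuous_sin).div_const _).smul continuous_const
        · exact continuous_const
      have hc2 := hD1γcont E' (hIooI hE')
      exact ((isBoundedBilinearMap_apply.continuous.comp (hc2.prodMk hc1)).add
        (hf1γconts E' (hIooI hE'))).aestronglyMeasurable
    · -- uniform bound for F'
      apply MeasureTheory.ae_of_all
      intro s _ t ht
      have htIoo := hballIoo ht
      have htI := hIooI htIoo
      have h1 : ‖dgamE' R t E ω s‖ ≤ Mm * (2 / σ t₀ + 1) := by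
        refine le_trans (hnormdgam t htIoo s) ?_
        have h2 : 2 / σ t ≤ 2 / σ t₀ :=
          div_le_div_of_nonneg_left (by norm_num) hσmpos (hσmle t ht)
        have h3 := hMm t ⟨htIoo.1.le, htIoo.2.le⟩
        have h4 : (0:ℝ) < 2 / σ t + 1 := by positivity
        have h5 : 2 / σ t + 1 ≤ 2 / σ t₀ + 1 := by linarith
        calc |muD E t| * (2 / σ t + 1) ≤ Mm * (2 / σ t + 1) :=
              mul_le_mul_of_nonneg_right h3 h4.le
          _ ≤ Mm * (2 / σ t₀ + 1) := mul_le_mul_of_nonneg_left h5 hMmnn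
      refine le_trans (norm_add_le _ _) ?_
      have h6 : ‖D1 (γ t s) t (dgamE' R t E ω s)‖ ≤ M1 * (Mm * (2 / σ t₀ + 1)) := by
        refine le_trans ((D1 (γ t s) t).le_opNorm _) ?_
        have h7 := hM1 (γ t s, t) ⟨hγball t s htIoo.1.le, htI⟩
        calc ‖D1 (γ t s) t‖ * ‖dgamE' R t E ω s‖
            ≤ M1 * ‖dgamE' R t E ω s‖ :=
              mul_le_mul_of_nonneg_right h7 (norm_nonneg _)
          _ ≤ M1 * (Mm * (2 / σ t₀ + 1)) := mul_le_mul_of_nonneg_left h1 hM1nn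
      have h8 : ‖f1 (γ t s) t‖ ≤ Mf1 := hMf1 (γ t s, t) ⟨hγball t s htIoo.1.le, htI⟩
      linarith
    · exact intervalIntegrable_const
    · -- differentiability in t for each s
      apply MeasureTheory.ae_of_all
      intro s _ t ht
      have htIoo := hballIoo ht
      have htI := hIooI htIoo
      have hγder : HasDerivAt (fun u => γ u s) (dgamE' R t E ω s) t :=
        hasDerivAt_gam hE0 htIoo.1 hRω s
      have hD : ∀ᶠ p : E3 × ℝ in 𝓝 (γ t s, t),
          HasFDerivAt (fun y => ψ x y p.2) (D1 p.1 p.2) p.1 := by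
        have hop : Set.Ioo E₀ Em ∈ 𝓝 t :=
          isOpen_Ioo.mem_nhds ⟨lt_of_le_of_lt hEE₀ htIoo.1, htIoo.2⟩
        filter_upwards [continuousAt_snd.preimage_mem_nhds hop] with p hp
        exact hD1def p.2 ⟨(hp : p.2 ∈ Set.Ioo E₀ Em).1.le, (hp : p.2 ∈ Set.Ioo E₀ Em).2.le⟩ p.1
      have hDc : ContinuousAt (fun p : E3 × ℝ => D1 p.1 p.2) (γ t s, t) := by
        apply hD1cont.continuousAt
        exact prod_mem_nhds Filter.univ_mem
          (Icc_mem_nhds (lt_of_le_of_lt hEE₀ htIoo.1) htIoo.2)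
      have hb : HasDerivAt (fun u => ψ x (γ t s) u) (f1 (γ t s) t) t := by
        have hd := ((hψE x hx (γ t s)).differentiableOn (by norm_num)) t htI
        have hw' := hd.hasDerivWithinAt.hasDerivAt
          (Icc_mem_nhds (lt_of_le_of_lt hEE₀ htIoo.1) htIoo.2)
        have heq : f1 (γ t s) t = derivWithin (fun u => ψ x (γ t s) u) I t := by
          simp only [hf1]
          rw [iteratedDerivWithin_one]
        rw [heq]
        exact hw'
      exact hasDerivAt_comp_partial hγder hD hDc hb
  -- final assembly
  refine ⟨?_, ?_⟩
  · intro E' hE'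
    have h := hpart1 E' hE'
    have heq1 : (∫ s in (0:ℝ)..(2*π),
        (inner ℝ (gradient (fun y => ψ x y E') (gam R E' E ω s)) (dgamE' R E' E ω s) : ℝ))
        = ∫ s in (0:ℝ)..(2*π), D1 (γ E' s) E' (dgamE' R E' E ω s) :=
      intervalIntegral.integral_congr (fun s _ => hinner E' s)
    have heq2 : (∫ s in (0:ℝ)..(2*π),
        derivWithin (fun u => ψ x (gam R E' E ω s) u) (Set.Icc E₀ Em) E')
        = ∫ s in (0:ℝ)..(2*π), f1 (γ E' s) E' := by
      apply intervalIntegral.integral_congr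
      intro s _
      symm
      simp only [hf1]
      rw [iteratedDerivWithin_one]
    rw [heq1, heq2]
    exact h
  · refine ⟨∫ s in (0:ℝ)..(2*π), Φ E s, hgradtend, ?_⟩
    apply hasDerivWithinAt_Ici_of_tendsto_deriv (s := Set.Ioo E Em)
    · intro t ht
      exact (hpart1 t ht).differentiableAt.differentiableWithinAt
    · exact hFtend.mono_left (nhdsWithin_mono E (fun t ht => ht.1))
    · exact hIoomem
    · have hder_eq : ∀ᶠ t in 𝓝[>] E,
          ((∫ s in (0:ℝ)..(2*π), Φ t s) + ∫ s in (0:ℝ)..(2*π), f1 (γ t s) t)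
          = deriv (fun t => ∫ s in (0:ℝ)..(2*π), ψ x (γ t s) t) t := by
        filter_upwards [hIoomem] with t ht
        rw [(hpart1 t ht).deriv]
        congr 1
        rw [← hgradterm_eq t ht]
        exact intervalIntegral.integral_congr (fun s _ => hinner t s)
      have hlim := hLtend.add hsectend
      have hfin := hlim.congr' hder_eq
      have hvals : (∫ s in (0:ℝ)..(2*π), Φ E s) + (∫ s in (0:ℝ)..(2*π), f1 (γ E s) E)
          = 2 * π * derivWithin (fun u => ψ x ω u) I E + ∫ s in (0:ℝ)..(2*π), Φ E s := by
        rw [hsecval, hf1deriv]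
        ring
      rw [hvals] at hfin
      exact hfin
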